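/- Let H and K be complex Hilbert spaces, A, B ∈ B(H) positive invertible operators with m₁²I ≤ A ≤ M₁²I and m₂²I ≤ B ≤ M₂²I for positive reals m₁ < M₁ and m₂ < M₂, and let Φ : B(H) → B(K) be a positive linear map. Then (M₂m₂/(M₁m₁))Φ(A) + Φ(B) ≤ (M₂/m₁ + m₂/M₁) Φ(A # B). -/

import Mathlib

open scoped InnerProductSpace

set_option maxHeartbeats 1000000
set_option synthInstance.maxHeartbeats 200000

noncomputable section

/-- The real power `A ^ r` of a (positive) operator, via the continuous functional calculus. -/
noncomputable def opPow {H : Type} [NormedAddCommGroup H] [InnerProductSpace ℂ H]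
    [CompleteSpace H] (A : H →L[ℂ] H) (r : ℝ) : H →L[ℂ] H :=
  cfc (fun t : ℝ => t ^ r) A

/-- The operator mean `A σ B = A^{1/2} f(A^{-1/2} B A^{-1/2}) A^{1/2}` associated with the
representing function `f`. -/
noncomputable def opMean {H : Type} [NormedAddCommGroup H] [InnerProductSpace ℂ H]
    [CompleteSpace H] (f : ℝ → ℝ) (A B : H →L[ℂ] H) : H →L[ℂ] H :=
  opPow A (1/2) * cfc f (opPow A (-(1/2)) * B * opPow A (-(1/2))) * opPow A (1/2)

/-- The weighted geometric mean `A #_α B = A^{1/2} (A^{-1/2} B A^{-1/2})^α A^{1/2}`. -/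
noncomputable def geoMean {H : Type} [NormedAddCommGroup H] [InnerProductSpace ℂ H]
    [CompleteSpace H] (α : ℝ) (A B : H →L[ℂ] H) : H →L[ℂ] H :=
  opMean (fun t : ℝ => t ^ α) A B

/-- `f : (0,∞) → (0,∞)` is operator monotone: for all positive invertible operators `X ≤ Y`
(on any complex Hilbert space), `f(X) ≤ f(Y)` in the Loewner order. -/
def IsOperatorMonotone (f : ℝ → ℝ) : Prop :=
  ∀ (H : Type) [NormedAddCommGroup H] [InnerProductSpace ℂ H] [CompleteSpace H]
    (X Y : H →L[ℂ] H), 0 ≤ X → IsUnit X → 0 ≤ Y → IsUnit Y → X ≤ Y →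
      cfc f X ≤ cfc f Y

private lemma smul_le_smul_op {H : Type} [NormedAddCommGroup H] [InnerProductSpace ℂ H]
    [CompleteSpace H] {c : ℝ} (hc : 0 ≤ c) {X Y : H →L[ℂ] H} (h : X ≤ Y) :
    c • X ≤ c • Y := by
  rw [← sub_nonneg, ← smul_sub]
  have h0 : (0 : H →L[ℂ] H) ≤ Y - X := sub_nonneg.2 h
  have h1 := star_left_conjugate_nonneg h0 ((Real.sqrt c) • (1 : H →L[ℂ] H))
  have h2 : star ((Real.sqrt c) • (1 : H →L[ℂ] H)) * (Y - X) * ((Real.sqrt c) • (1 : H →L[ℂ] H))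
      = c • (Y - X) := by
    simp [star_smul, smul_smul, mul_smul_comm, smul_mul_assoc, Real.mul_self_sqrt hc]
  rwa [h2] at h1

/-- **Diaz–Metcalf type inequality of the second type.** -/
theorem stmt_2 {H K : Type} [NormedAddCommGroup H] [InnerProductSpace ℂ H] [CompleteSpace H]
    [NormedAddCommGroup K] [InnerProductSpace ℂ K] [CompleteSpace K]
    (A B : H →L[ℂ] H) (hA : 0 ≤ A) (hAu : IsUnit A) (hB : 0 ≤ B) (hBu : IsUnit B)
    (m₁ M₁ m₂ M₂ : ℝ) (hm₁ : 0 < m₁) (hM₁ : m₁ < M₁) (hm₂ : 0 < m₂) (hM₂ : m₂ < M₂)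
    (hA₁ : (m₁ ^ 2) • (1 : H →L[ℂ] H) ≤ A) (hA₂ : A ≤ (M₁ ^ 2) • (1 : H →L[ℂ] H))
    (hB₁ : (m₂ ^ 2) • (1 : H →L[ℂ] H) ≤ B) (hB₂ : B ≤ (M₂ ^ 2) • (1 : H →L[ℂ] H))
    (Φ : (H →L[ℂ] H) →ₗ[ℂ] (K →L[ℂ] K))
    (hΦ : ∀ X : H →L[ℂ] H, 0 ≤ X → 0 ≤ Φ X) :
    (M₂ * m₂ / (M₁ * m₁)) • Φ A + Φ B ≤ (M₂ / m₁ + m₂ / M₁) • Φ (geoMean (1/2) A B) := by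
  have hM₁0 : (0:ℝ) < M₁ := hm₁.trans hM₁
  have hM₂0 : (0:ℝ) < M₂ := hm₂.trans hM₂
  have hA_sa : IsSelfAdjoint A := .of_nonneg hA
  have hB_sa : IsSelfAdjoint B := .of_nonneg hB
  have hA₁' : algebraMap ℝ (H →L[ℂ] H) (m₁ ^ 2) ≤ A := by
    rwa [Algebra.algebraMap_eq_smul_one]
  have hA₂' : A ≤ algebraMap ℝ (H →L[ℂ] H) (M₁ ^ 2) := by
    rwa [Algebra.algebraMap_eq_smul_one]
  have spA_lb := (algebraMap_le_iff_le_spectrum (a := A) hA_sa).mp hA₁'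
  have spA_ub := (le_algebraMap_iff_spectrum_le (a := A) hA_sa).mp hA₂'
  have spA_pos : ∀ x ∈ spectrum ℝ A, 0 < x := fun x hx =>
    lt_of_lt_of_le (by positivity) (spA_lb x hx)
  -- continuity of rpow on positive spectra
  have contOn : ∀ (r : ℝ) (X : H →L[ℂ] H), (∀ x ∈ spectrum ℝ X, 0 < x) →
      ContinuousOn (fun t : ℝ => t ^ r) (spectrum ℝ X) := fun r X hX x hx =>
    (Real.continuousAt_rpow_const x r (Or.inl (hX x hx).ne')).continuousWithinAt
  set T := opPow A (1/2) with hT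
  set S := opPow A (-(1/2)) with hSdef
  have hT_sa : IsSelfAdjoint T := cfc_predicate _ A
  have hS_sa : IsSelfAdjoint S := cfc_predicate _ A
  have hTS : T * S = 1 := by
    rw [hT, hSdef, opPow, opPow,
      ← cfc_mul _ _ A (contOn _ _ spA_pos) (contOn _ _ spA_pos)]
    have : cfc (fun x : ℝ => x ^ (1/2 : ℝ) * x ^ (-(1/2) : ℝ)) A = cfc (1 : ℝ → ℝ) A :=
      cfc_congr fun x hx => by
        rw [← Real.rpow_add (spA_pos x hx)]
        norm_num
    rw [this, cfc_one ℝ A]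
  have hST : S * T = 1 := by
    rw [hT, hSdef, opPow, opPow,
      ← cfc_mul _ _ A (contOn _ _ spA_pos) (contOn _ _ spA_pos)]
    have : cfc (fun x : ℝ => x ^ (-(1/2) : ℝ) * x ^ (1/2 : ℝ)) A = cfc (1 : ℝ → ℝ) A :=
      cfc_congr fun x hx => by
        rw [← Real.rpow_add (spA_pos x hx)]
        norm_num
    rw [this, cfc_one ℝ A]
  have hTT : T * T = A := by
    rw [hT, opPow, ← cfc_mul _ _ A (contOn _ _ spA_pos) (contOn _ _ spA_pos)]
    have : cfc (fun x : ℝ => x ^ (1/2 : ℝ) * x ^ (1/2 : ℝ)) A = cfc (id : ℝ → ℝ) A :=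
      cfc_congr fun x hx => by
        rw [← Real.rpow_add (spA_pos x hx)]
        norm_num
    rw [this, cfc_id ℝ A]
  have hSS : S * S = cfc (fun x : ℝ => x ^ (-1 : ℝ)) A := by
    rw [hSdef, opPow, ← cfc_mul _ _ A (contOn _ _ spA_pos) (contOn _ _ spA_pos)]
    exact cfc_congr fun x hx => by
      rw [← Real.rpow_add (spA_pos x hx)]
      norm_num
  have hSS_ub : S * S ≤ algebraMap ℝ (H →L[ℂ] H) ((m₁ ^ 2)⁻¹) := by
    rw [hSS]
    refine (cfc_le_algebraMap_iff _ _ _ (contOn _ _ spA_pos) hA_sa).mpr fun x hx => ?_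
    rw [Real.rpow_neg_one]
    exact inv_anti₀ (by positivity) (spA_lb x hx)
  have hSS_lb : algebraMap ℝ (H →L[ℂ] H) ((M₁ ^ 2)⁻¹) ≤ S * S := by
    rw [hSS]
    refine (algebraMap_le_cfc_iff _ _ _ (contOn _ _ spA_pos) hA_sa).mpr fun x hx => ?_
    rw [Real.rpow_neg_one]
    exact inv_anti₀ (spA_pos x hx) (spA_ub x hx)
  set C := S * B * S with hCdef
  have hC_sa : IsSelfAdjoint C := by
    rw [hCdef, IsSelfAdjoint]
    simp [star_mul, hS_sa.star_eq, hB_sa.star_eq, mul_assoc]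
  have hC_lb : algebraMap ℝ (H →L[ℂ] H) ((m₂ / M₁) ^ 2) ≤ C := by
    have h1 := star_left_conjugate_le_conjugate hB₁ S
    rw [hS_sa.star_eq] at h1
    have h2 : S * ((m₂ ^ 2) • (1 : H →L[ℂ] H)) * S = (m₂ ^ 2) • (S * S) := by
      simp [smul_mul_assoc, mul_smul_comm]
    rw [h2] at h1
    calc algebraMap ℝ (H →L[ℂ] H) ((m₂ / M₁) ^ 2)
        = (m₂ ^ 2) • algebraMap ℝ (H →L[ℂ] H) ((M₁ ^ 2)⁻¹) := by
          rw [Algebra.algebraMap_eq_smul_one, Algebra.algebraMap_eq_smul_one, smul_smul]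
          congr 1
          field_simp
      _ ≤ (m₂ ^ 2) • (S * S) := smul_le_smul_op (by positivity) hSS_lb
      _ ≤ C := h1
  have hC_ub : C ≤ algebraMap ℝ (H →L[ℂ] H) ((M₂ / m₁) ^ 2) := by
    have h1 := star_left_conjugate_le_conjugate hB₂ S
    rw [hS_sa.star_eq] at h1
    have h2 : S * ((M₂ ^ 2) • (1 : H →L[ℂ] H)) * S = (M₂ ^ 2) • (S * S) := by
      simp [smul_mul_assoc, mul_smul_comm]
    rw [h2] at h1
    calc C ≤ (M₂ ^ 2) • (S * S) := h1
      _ ≤ (M₂ ^ 2) • algebraMap ℝ (H →L[ℂ] H) ((m₁ ^ 2)⁻¹) :=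
          smul_le_smul_op (by positivity) hSS_ub
      _ = algebraMap ℝ (H →L[ℂ] H) ((M₂ / m₁) ^ 2) := by
          rw [Algebra.algebraMap_eq_smul_one, Algebra.algebraMap_eq_smul_one, smul_smul]
          congr 1
          field_simp
  have spC_lb := (algebraMap_le_iff_le_spectrum (a := C) hC_sa).mp hC_lb
  have spC_ub := (le_algebraMap_iff_spectrum_le (a := C) hC_sa).mp hC_ub
  have spC_pos : ∀ x ∈ spectrum ℝ C, 0 < x := fun x hx =>
    lt_of_lt_of_le (by positivity) (spC_lb x hx)
  -- the key scalar inequality, transferred through the functional calculus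
  have key : cfc (fun t : ℝ => M₂ * m₂ / (M₁ * m₁) + t) C
      ≤ cfc (fun t : ℝ => (M₂ / m₁ + m₂ / M₁) * t ^ ((1:ℝ)/2)) C := by
    refine (cfc_le_iff (fun t : ℝ => M₂ * m₂ / (M₁ * m₁) + t)
        (fun t : ℝ => (M₂ / m₁ + m₂ / M₁) * t ^ ((1:ℝ)/2)) C ?_ ?_ hC_sa).mpr ?_
    · exact continuousOn_const.add continuousOn_id
    · exact continuousOn_const.mul (contOn _ _ spC_pos)
    intro x hx
    have h1 : (m₂ / M₁) ^ 2 ≤ x := spC_lb x hx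
    have h2 : x ≤ (M₂ / m₁) ^ 2 := spC_ub x hx
    have hx0 : (0:ℝ) ≤ x := le_trans (by positivity) h1
    have hs1 : m₂ / M₁ ≤ Real.sqrt x := by
      have := Real.sqrt_le_sqrt h1
      rwa [Real.sqrt_sq (by positivity)] at this
    have hs2 : Real.sqrt x ≤ M₂ / m₁ := by
      have := Real.sqrt_le_sqrt h2
      rwa [Real.sqrt_sq (by positivity)] at this
    have hsx : Real.sqrt x * Real.sqrt x = x := Real.mul_self_sqrt hx0
    have e1 : M₂ * m₂ / (M₁ * m₁) = (m₂ / M₁) * (M₂ / m₁) := by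
      field_simp
    rw [← Real.sqrt_eq_rpow, e1]
    nlinarith [mul_nonneg (sub_nonneg.2 hs1) (sub_nonneg.2 hs2)]
  have lhs_eq : cfc (fun t : ℝ => M₂ * m₂ / (M₁ * m₁) + t) C
      = algebraMap ℝ (H →L[ℂ] H) (M₂ * m₂ / (M₁ * m₁)) + C := by
    have := cfc_const_add (M₂ * m₂ / (M₁ * m₁)) (id : ℝ → ℝ) C continuousOn_id hC_sa
    simpa [cfc_id (R := ℝ) C hC_sa] using this
  have rhs_eq : cfc (fun t : ℝ => (M₂ / m₁ + m₂ / M₁) * t ^ ((1:ℝ)/2)) C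
      = (M₂ / m₁ + m₂ / M₁) • cfc (fun t : ℝ => t ^ ((1:ℝ)/2)) C :=
    cfc_const_mul _ _ C (contOn _ _ spC_pos)
  rw [lhs_eq, rhs_eq] at key
  -- conjugate by T
  have conj := star_left_conjugate_le_conjugate key T
  rw [hT_sa.star_eq] at conj
  have lhs_c : T * (algebraMap ℝ (H →L[ℂ] H) (M₂ * m₂ / (M₁ * m₁)) + C) * T
      = (M₂ * m₂ / (M₁ * m₁)) • A + B := by
    rw [Algebra.algebraMap_eq_smul_one]
    rw [mul_add, add_mul]
    congr 1
    · simp only [mul_smul_comm, smul_mul_assoc, mul_one]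
      rw [hTT]
    · rw [hCdef]
      calc T * (S * B * S) * T = (T * S) * B * (S * T) := by noncomm_ring
        _ = B := by rw [hTS, hST, one_mul, mul_one]
  have rhs_c : T * ((M₂ / m₁ + m₂ / M₁) • cfc (fun t : ℝ => t ^ ((1:ℝ)/2)) C) * T
      = (M₂ / m₁ + m₂ / M₁) • geoMean (1/2) A B := by
    simp only [mul_smul_comm, smul_mul_assoc]
    congr 1
  rw [lhs_c, rhs_c] at conj
  -- apply Φ
  have hmono : ∀ X Y : H →L[ℂ] H, X ≤ Y → Φ X ≤ Φ Y := by
    intro X Y h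
    have := hΦ (Y - X) (sub_nonneg.2 h)
    rw [map_sub] at this
    exact sub_nonneg.mp this
  have := hmono _ _ conj
  rwa [map_add, LinearMap.map_smul_of_tower, LinearMap.map_smul_of_tower] at this
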